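/- Let N > 2 be an integer, p > 1, and k < 0. If H : (0, π) → ℝ is differentiable and satisfies the H-equation on (0, π), with H(x) < 0 and H'(x) < 0 for all x ∈ (0, π), then H(x) → -∞ as x → π⁻. -/

import Mathlib

noncomputable section
open Real Set Filter Topology

/-- `H` satisfies the first-order H-equation (for parameters `p`, `N`, `k`) on the set `I`:
`((p-1)H² + k²)H' = (1-p)(H² + k²)² + (H² + k²)(k(p-N) + (2-N)·H·cot x)`. -/
def HEqOn (p : ℝ) (N : ℕ) (k : ℝ) (H : ℝ → ℝ) (I : Set ℝ) : Prop :=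
  ∀ x ∈ I,
    ((p - 1) * (H x) ^ 2 + k ^ 2) * deriv H x =
      (1 - p) * ((H x) ^ 2 + k ^ 2) ^ 2
        + ((H x) ^ 2 + k ^ 2) * (k * (p - (N : ℝ)) + (2 - (N : ℝ)) * H x * Real.cot x)

set_option maxHeartbeats 1000000

private lemma key_ineq (p δ k h ct H' M : ℝ) (N : ℕ) (hp : 1 < p) (hN : 2 < N) (hk : k < 0)
    (hδ : 0 < δ) (hhδ : h ≤ -δ) (hM : h ^ 2 ≤ M ^ 2) (hct : ct ≤ 0)
    (heq : ((p - 1) * h ^ 2 + k ^ 2) * H' =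
      (1 - p) * (h ^ 2 + k ^ 2) ^ 2 + (h ^ 2 + k ^ 2) * (k * (p - (N : ℝ)) + (2 - (N : ℝ)) * h * ct)) :
    H' ≤ (M ^ 2 + k ^ 2) * |k * (p - (N : ℝ))| / k ^ 2
      + (k ^ 2 * ((N : ℝ) - 2) * δ / ((p - 1) * M ^ 2 + k ^ 2)) * ct := by
  have hk2 : (0:ℝ) < k ^ 2 := by nlinarith
  have hN2 : (2:ℝ) < (N:ℝ) := by exact_mod_cast hN
  have hh2 : (0:ℝ) ≤ h ^ 2 := sq_nonneg h
  have hM2 : (0:ℝ) ≤ M ^ 2 := le_trans hh2 hM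
  have hD : (0:ℝ) < (p - 1) * h ^ 2 + k ^ 2 := by nlinarith
  have hDmax : (0:ℝ) < (p - 1) * M ^ 2 + k ^ 2 := by nlinarith
  set C : ℝ := (M ^ 2 + k ^ 2) * |k * (p - (N : ℝ))| / k ^ 2 with hCdef
  set c : ℝ := k ^ 2 * ((N : ℝ) - 2) * δ / ((p - 1) * M ^ 2 + k ^ 2) with hcdef
  clear_value C c
  have hC0 : 0 ≤ C := by
    rw [hCdef]
    apply div_nonneg _ (le_of_lt hk2)
    exact mul_nonneg (by nlinarith) (abs_nonneg _)
  have hc0 : 0 < c := by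
    rw [hcdef]
    apply div_pos _ hDmax
    have h1 : (0:ℝ) < (N:ℝ) - 2 := by linarith
    exact mul_pos (mul_pos hk2 h1) hδ
  -- Step A
  have hA : (1 - p) * (h ^ 2 + k ^ 2) ^ 2 ≤ 0 := by nlinarith [sq_nonneg (h ^ 2 + k ^ 2)]
  -- Step B
  have hB : (h ^ 2 + k ^ 2) * (k * (p - (N : ℝ))) ≤ (M ^ 2 + k ^ 2) * |k * (p - (N : ℝ))| := by
    calc (h ^ 2 + k ^ 2) * (k * (p - (N : ℝ))) ≤ (h ^ 2 + k ^ 2) * |k * (p - (N : ℝ))| :=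
          mul_le_mul_of_nonneg_left (le_abs_self _) (by nlinarith)
      _ ≤ (M ^ 2 + k ^ 2) * |k * (p - (N : ℝ))| :=
          mul_le_mul_of_nonneg_right (by linarith) (abs_nonneg _)
  -- Step C
  have hStepC : (h ^ 2 + k ^ 2) * ((2 - (N : ℝ)) * h * ct) ≤ k ^ 2 * ((N : ℝ) - 2) * δ * ct := by
    have h2 : ((N : ℝ) - 2) * δ ≤ (2 - (N : ℝ)) * h := by
      have h0 := mul_le_mul_of_nonneg_left (show δ ≤ -h by linarith)
        (show (0:ℝ) ≤ (N:ℝ) - 2 by linarith)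
      nlinarith [h0]
    have h1 : k ^ 2 * (((N : ℝ) - 2) * δ) ≤ (h ^ 2 + k ^ 2) * ((2 - (N : ℝ)) * h) :=
      mul_le_mul (by linarith) h2 (mul_nonneg (by linarith) hδ.le) (by positivity)
    have h3 := mul_le_mul_of_nonpos_right h1 hct
    have e1 : (h ^ 2 + k ^ 2) * ((2 - (N : ℝ)) * h * ct)
        = (h ^ 2 + k ^ 2) * ((2 - (N : ℝ)) * h) * ct := by ring
    have e2 : k ^ 2 * ((N : ℝ) - 2) * δ * ct = k ^ 2 * (((N : ℝ) - 2) * δ) * ct := by ring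
    rw [e1, e2]; exact h3
  -- combine
  have hNum : ((p - 1) * h ^ 2 + k ^ 2) * H' ≤
      (M ^ 2 + k ^ 2) * |k * (p - (N : ℝ))| + k ^ 2 * ((N : ℝ) - 2) * δ * ct := by
    have hexp : ((p - 1) * h ^ 2 + k ^ 2) * H' =
        (1 - p) * (h ^ 2 + k ^ 2) ^ 2 + (h ^ 2 + k ^ 2) * (k * (p - (N : ℝ)))
          + (h ^ 2 + k ^ 2) * ((2 - (N : ℝ)) * h * ct) := by rw [heq]; ring
    linarith
  -- Step D
  have hD2 : (M ^ 2 + k ^ 2) * |k * (p - (N : ℝ))| ≤ ((p - 1) * h ^ 2 + k ^ 2) * C := by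
    have hkC : k ^ 2 * C = (M ^ 2 + k ^ 2) * |k * (p - (N : ℝ))| := by
      rw [hCdef]; field_simp; exact mul_div_cancel_left₀ _ hk.ne
    have h1 : k ^ 2 * C ≤ ((p - 1) * h ^ 2 + k ^ 2) * C :=
      mul_le_mul_of_nonneg_right
        (by have := mul_nonneg (show (0:ℝ) ≤ p - 1 by linarith) hh2; linarith) hC0
    linarith
  -- Step E
  have hE : k ^ 2 * ((N : ℝ) - 2) * δ * ct ≤ ((p - 1) * h ^ 2 + k ^ 2) * (c * ct) := by
    have hcD : ((p - 1) * M ^ 2 + k ^ 2) * c = k ^ 2 * ((N : ℝ) - 2) * δ := by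
      rw [hcdef]; field_simp
    have hDle : (p - 1) * h ^ 2 + k ^ 2 ≤ (p - 1) * M ^ 2 + k ^ 2 := by
      have := mul_le_mul_of_nonneg_left hM (show (0:ℝ) ≤ p - 1 by linarith); linarith
    have hcct : c * ct ≤ 0 := mul_nonpos_of_nonneg_of_nonpos (le_of_lt hc0) hct
    have h1 := mul_le_mul_of_nonpos_right hDle hcct
    have e : k ^ 2 * ((N : ℝ) - 2) * δ * ct = ((p - 1) * M ^ 2 + k ^ 2) * (c * ct) := by
      rw [← hcD]; ring
    rw [e]; exact h1
  have hfin : ((p - 1) * h ^ 2 + k ^ 2) * H' ≤ ((p - 1) * h ^ 2 + k ^ 2) * (C + c * ct) := by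
    have : ((p - 1) * h ^ 2 + k ^ 2) * (C + c * ct)
        = ((p - 1) * h ^ 2 + k ^ 2) * C + ((p - 1) * h ^ 2 + k ^ 2) * (c * ct) := by ring
    linarith
  exact le_of_mul_le_mul_left hfin hD

/-- A negative decreasing solution of the H-equation on `(0,π)` blows down to `-∞`
as `x → π⁻`. -/
theorem H_blowup_at_pi (N : ℕ) (hN : 2 < N) (p : ℝ) (hp : 1 < p) (k : ℝ) (hk : k < 0)
    (H : ℝ → ℝ)
    (hd : ∀ x ∈ Ioo (0 : ℝ) π, DifferentiableAt ℝ H x)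
    (heq : HEqOn p N k H (Ioo 0 π))
    (hneg : ∀ x ∈ Ioo (0 : ℝ) π, H x < 0 ∧ deriv H x < 0) :
    Tendsto H (nhdsWithin π (Iio π)) atBot := by
  have hπ : (0:ℝ) < π := pi_pos
  have hπ2 : π / 2 ∈ Ioo (0:ℝ) π := ⟨by linarith, by linarith⟩
  -- H is strictly decreasing on (0, π)
  have hanti : StrictAntiOn H (Ioo 0 π) := by
    apply strictAntiOn_of_deriv_neg (convex_Ioo 0 π)
      (fun x hx => (hd x hx).continuousAt.continuousWithinAt)
    intro x hx
    rw [interior_Ioo] at hx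
    exact (hneg x hx).2
  -- H is unbounded below on (0, π)
  have key : ∀ B : ℝ, ∃ x ∈ Ioo (0:ℝ) π, H x < B := by
    by_contra hcon
    push_neg at hcon
    obtain ⟨B, hB⟩ := hcon
    set δ : ℝ := -H (π / 2) with hδdef
    clear_value δ
    have hδ : 0 < δ := by
      have := (hneg _ hπ2).1; rw [hδdef]; linarith
    set M : ℝ := max 1 (-B) with hMdef
    clear_value M
    have hM1 : (0:ℝ) < M := lt_of_lt_of_le one_pos (hMdef ▸ le_max_left _ _)
    have hMbound : ∀ x ∈ Ioo (0:ℝ) π, (H x) ^ 2 ≤ M ^ 2 := by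
      intro x hx
      have h1 : B ≤ H x := hB x hx
      have h2 : H x < 0 := (hneg x hx).1
      have h3 : -H x ≤ -B := by linarith
      have h5 : (1:ℝ) ≤ M := hMdef ▸ le_max_left _ _
      have h4 : -B ≤ M := hMdef ▸ le_max_right _ _
      nlinarith
    set C : ℝ := (M ^ 2 + k ^ 2) * |k * (p - (N : ℝ))| / k ^ 2 with hCdef
    set c : ℝ := k ^ 2 * ((N : ℝ) - 2) * δ / ((p - 1) * M ^ 2 + k ^ 2) with hcdef
    have hk2 : (0:ℝ) < k ^ 2 := by nlinarith
    have hN2 : (2:ℝ) < (N:ℝ) := by exact_mod_cast hN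
    have hDmax : (0:ℝ) < (p - 1) * M ^ 2 + k ^ 2 := by nlinarith
    have hC0 : 0 ≤ C := by
      rw [hCdef]
      exact div_nonneg (mul_nonneg (by nlinarith) (abs_nonneg _)) hk2.le
    have hc0 : 0 < c := by
      rw [hcdef]
      exact div_pos (mul_pos (mul_pos hk2 (by linarith)) hδ) hDmax
    clear_value C c
    -- the comparison function g
    set g : ℝ → ℝ := fun x => H x - C * x - c * Real.log (Real.sin x) with hgdef
    clear_value g
    have hsinpos : ∀ x ∈ Ico (π/2) π, 0 < Real.sin x := fun x hx =>
      Real.sin_pos_of_pos_of_lt_pi (by linarith [hx.1]) hx.2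
    have hsub : Ico (π/2) π ⊆ Ioo (0:ℝ) π := fun x hx => ⟨by linarith [hx.1], hx.2⟩
    -- g has nonpositive derivative on (π/2, π)
    have hgderiv : ∀ x ∈ Ioo (π/2) π,
        HasDerivAt g (deriv H x - C - c * (Real.cos x / Real.sin x)) x := by
      intro x hx
      have hxm : x ∈ Ioo (0:ℝ) π := hsub ⟨hx.1.le, hx.2⟩
      have hsin : Real.sin x ≠ 0 := (hsinpos x ⟨hx.1.le, hx.2⟩).ne'
      have h1 : HasDerivAt H (deriv H x) x := (hd x hxm).hasDerivAt
      have h2 : HasDerivAt (fun y => Real.log (Real.sin y)) (Real.cos x / Real.sin x) x :=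
        (Real.hasDerivAt_sin x).log hsin
      have h3 : HasDerivAt (fun y => C * y) C x := by
        simpa using (hasDerivAt_id x).const_mul C
      rw [hgdef]; exact (h1.sub h3).sub (h2.const_mul c)
    have hganti : AntitoneOn g (Ico (π/2) π) := by
      apply antitoneOn_of_deriv_nonpos (convex_Ico _ _)
      · -- continuity
        rw [hgdef]
        apply ContinuousOn.sub
        apply ContinuousOn.sub
        · exact fun x hx => ((hd x (hsub hx)).continuousAt).continuousWithinAt
        · exact (continuous_const.mul continuous_id).continuousOn
        · exact ContinuousOn.mul continuousOn_const
            (ContinuousOn.log (Real.continuous_sin.continuousOn)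
              (fun x hx => (hsinpos x hx).ne'))
      · intro x hx
        rw [interior_Ico] at hx
        exact (hgderiv x hx).differentiableAt.differentiableWithinAt
      · intro x hx
        rw [interior_Ico] at hx
        rw [(hgderiv x hx).deriv]
        have hxm : x ∈ Ioo (0: ℝ) π := hsub ⟨hx.1.le, hx.2⟩
        -- cot x ≤ 0 on (π/2, π)
        have hct : Real.cos x / Real.sin x ≤ 0 :=
          div_nonpos_of_nonpos_of_nonneg
            (Real.cos_nonpos_of_pi_div_two_le_of_le hx.1.le (by linarith [hx.2]))
            (hsinpos x ⟨hx.1.le, hx.2⟩).le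
        -- H x ≤ -δ
        have hhδ : H x ≤ -δ := by
          have := hanti hπ2 hxm hx.1
          simp [hδdef]; linarith
        -- the ODE with cot rewritten
        have heqx := heq x hxm
        rw [Real.cot_eq_cos_div_sin] at heqx
        have := key_ineq p δ k (H x) (Real.cos x / Real.sin x) (deriv H x) M N hp hN hk
          hδ hhδ (hMbound x hxm) hct heqx
        rw [← hCdef, ← hcdef] at this
        linarith
    -- now derive a contradiction: choose x near π with sin x small
    set K : ℝ := g (π/2) + C * π with hKdef
    set t : ℝ := (B - 1 - K) / c with htdef
    set ε : ℝ := min (π/4) (Real.exp t / 2) with hεdef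
    clear_value K t ε
    have hε0 : 0 < ε := hεdef ▸ lt_min (by linarith) (half_pos (Real.exp_pos t))
    have hεπ : ε < π / 2 := lt_of_le_of_lt (hεdef ▸ min_le_left _ _) (by linarith)
    set x : ℝ := π - ε with hxdef
    clear_value x
    have hxmem : x ∈ Ico (π/2) π := ⟨by rw [hxdef]; linarith, by rw [hxdef]; linarith⟩
    have hxmem' : x ∈ Ioo (0:ℝ) π := hsub hxmem
    have hx2 : π/2 ∈ Ico (π/2) π := ⟨le_refl _, by linarith⟩
    have hgle : g x ≤ g (π/2) := hganti hx2 hxmem hxmem.1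
    -- sin x < exp t
    have hsinx : Real.sin x = Real.sin ε := by rw [hxdef, Real.sin_pi_sub]
    have hsinlt : Real.sin x < Real.exp t := by
      rw [hsinx]
      calc Real.sin ε ≤ ε := Real.sin_le hε0.le
        _ ≤ Real.exp t / 2 := hεdef ▸ min_le_right _ _
        _ < Real.exp t := by linarith [Real.exp_pos t]
    have hlogt : Real.log (Real.sin x) < t :=
      (Real.log_lt_iff_lt_exp (hsinpos x hxmem)).mpr hsinlt
    -- conclude H x < B
    have hHx : H x ≤ g (π/2) + C * x + c * Real.log (Real.sin x) := by
      have hgx : g x = H x - C * x - c * Real.log (Real.sin x) := by rw [hgdef]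
      rw [hgx] at hgle
      linarith
    have hCx : C * x ≤ C * π := mul_le_mul_of_nonneg_left (by linarith [hxmem.2]) hC0
    have hclog : c * Real.log (Real.sin x) < c * t := by
      exact (mul_lt_mul_iff_right₀ hc0).mpr hlogt
    have hct2 : c * t = B - 1 - K := by
      rw [htdef]; field_simp
    have hcontra : H x < B := by linarith [hHx, hCx, hclog, hct2, hKdef]
    exact absurd hcontra (not_lt.mpr (hB x hxmem'))
  -- conclude tendsto atBot
  rw [tendsto_atBot]
  intro B
  obtain ⟨x₀, hx₀, hHx₀⟩ := key B
  have hmem : Ioo x₀ π ∈ 𝓝[<] π := Ioo_mem_nhdsLT_of_mem (right_mem_Ioc.mpr hx₀.2)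
  filter_upwards [hmem] with x hx
  have hxm : x ∈ Ioo (0:ℝ) π := ⟨lt_trans hx₀.1 hx.1, hx.2⟩
  exact le_of_lt (lt_trans (hanti hx₀ hxm hx.1) hHx₀)
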